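/- Let v and w be distinct 1-prefix normal words both starting with 1. Then their extension languages differ: there exists a word u such that exactly one of v·u and w·u is 1-prefix normal. -/

import Mathlib

/-- `w` is 1-prefix normal: no factor of `w` has more 1s than the prefix of the same length. -/
def IsPrefixNormal1 (w : List Bool) : Prop :=
  ∀ v : List Bool, v <:+: w → v.count true ≤ (w.take v.length).count true

namespace PN19

def C (x : List Bool) (n : ℕ) : ℕ := (x.take n).count true

lemma C_zero (x : List Bool) : C x 0 = 0 := rfl

lemma C_mono (x : List Bool) {m n : ℕ} (h : m ≤ n) : C x m ≤ C x n := by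
  have h1 : x.take m = (x.take n).take m := by
    rw [List.take_take, Nat.min_eq_left h]
  rw [C, C, h1]
  exact ((x.take n).take_sublist m).count_le true

lemma C_of_le (x : List Bool) {n : ℕ} (h : x.length ≤ n) : C x n = x.count true := by
  rw [C, List.take_of_length_le h]

lemma C_min (x : List Bool) (n : ℕ) : C x (min n x.length) = C x n := by
  rcases le_total n x.length with h | h
  · rw [Nat.min_eq_left h]
  · rw [Nat.min_eq_right h, C_of_le x h, C_of_le x le_rfl]

lemma C_append (x y : List Bool) (n : ℕ) :
    C (x ++ y) n = C x n + C y (n - x.length) := by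
  rw [C, List.take_append, List.count_append, C, C]

lemma C_replicate (a n : ℕ) : C (List.replicate a false) n = 0 := by
  rw [C, List.take_replicate, List.count_replicate]
  simp

lemma C_singleton (n : ℕ) : C [true] n = min n 1 := by
  cases n with
  | zero => rfl
  | succ m =>
    have h : min (m + 1) 1 = 1 := by omega
    rw [h, C, List.take_of_length_le (by simp)]
    rfl

lemma C_take (x : List Bool) (k n : ℕ) : C (x.take k) n = C x (min n k) := by
  rw [C, List.take_take, C]

lemma window0 (x : List Bool) (hx : IsPrefixNormal1 x) {i j : ℕ} (hij : i ≤ j)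
    (hj : j ≤ x.length) : C x j ≤ C x i + C x (j - i) := by
  have h1 : x.take i = (x.take j).take i := by
    rw [List.take_take, Nat.min_eq_left hij]
  have h2 : x.take i ++ (x.take j).drop i = x.take j := by
    rw [h1, List.take_append_drop]
  have hinf : (x.take j).drop i <:+: x :=
    ⟨x.take i, x.drop j, by rw [h2, List.take_append_drop]⟩
  have hlen : ((x.take j).drop i).length = j - i := by
    rw [List.length_drop, List.length_take]
    omega
  have hb := hx _ hinf
  rw [hlen] at hb
  have h3 := congrArg (List.count true) h2
  rw [List.count_append] at h3
  have h4 : C x j = C x i + ((x.take j).drop i).count true := by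
    rw [C, C, ← h3]
  rw [h4]
  exact Nat.add_le_add_left hb _

lemma window (x : List Bool) (hx : IsPrefixNormal1 x) (i j : ℕ) :
    C x j ≤ C x i + C x (j - i) := by
  rcases le_total j i with h | h
  · exact le_trans (C_mono x h) (Nat.le_add_right _ _)
  rcases le_total j x.length with hj | hj
  · exact window0 x hx h hj
  rcases le_total i x.length with hi | hi
  · have h1 : C x j = C x x.length := by rw [C_of_le x hj, C_of_le x le_rfl]
    have h2 := window0 x hx hi le_rfl
    have h3 : C x (x.length - i) ≤ C x (j - i) := C_mono x (by omega)
    linarith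
  · have h1 : C x j = C x i := by rw [C_of_le x hj, C_of_le x hi]
    exact le_trans (le_of_eq h1) (Nat.le_add_right _ _)

lemma pn_of (x : List Bool)
    (h : ∀ i j, i ≤ j → j ≤ x.length → C x j ≤ C x i + C x (j - i)) :
    IsPrefixNormal1 x := by
  intro g hg
  obtain ⟨s, t, hst⟩ := hg
  have hst' : x = s ++ (g ++ t) := by rw [← hst]; simp [List.append_assoc]
  have hlen : s.length + g.length ≤ x.length := by
    rw [hst']; simp [List.length_append]
  have hCi : C x s.length = s.count true := by
    rw [hst', C_append, Nat.sub_self, C_zero, add_zero, C_of_le s le_rfl]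
  have hCj : C x (s.length + g.length) = s.count true + g.count true := by
    rw [hst', C_append, C_append, C_of_le s (by omega), Nat.add_sub_cancel_left,
      C_of_le g le_rfl, Nat.sub_self, C_zero, add_zero]
  have hw := h s.length (s.length + g.length) (Nat.le_add_right _ _) hlen
  rw [hCi, hCj, Nat.add_sub_cancel_left] at hw
  exact Nat.le_of_add_le_add_left hw

lemma arith1 (c : ℕ → ℕ) (N a k : ℕ)
    (cw : ∀ i j : ℕ, c j ≤ c i + c (j - i))
    (cm : ∀ m n : ℕ, m ≤ n → c m ≤ c n)
    (c0 : c 0 = 0)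
    (cT : ∀ n, N ≤ n → c n = c N)
    (ha : N ≤ a) (hk : k ≤ N) (i j : ℕ) (hij : i ≤ j) :
    c j + c (min (j - N - a) k) ≤
      c i + c (min (i - N - a) k) + (c (j - i) + c (min (j - i - N - a) k)) := by
  by_cases h1 : j ≤ N + a
  · have e1 : min (j - N - a) k = 0 := by omega
    have e2 : min (j - i - N - a) k = 0 := by omega
    rw [e1, e2, c0]
    have t := cw i j
    linarith [Nat.zero_le (c (min (i - N - a) k))]
  · push_neg at h1
    by_cases h2 : N + a ≤ i
    · have hci : c i = c N := cT i (by omega)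
      have hcj : c j = c N := cT j (by omega)
      have t1 := cw (min (i - N - a) k) (min (j - N - a) k)
      have t2 : c (min (j - N - a) k - min (i - N - a) k) ≤ c (j - i) :=
        cm _ _ (by omega)
      linarith [Nat.zero_le (c (min (j - i - N - a) k))]
    · push_neg at h2
      by_cases h3 : N ≤ i
      · have hci : c i = c N := cT i h3
        have hcj : c j = c N := cT j (by omega)
        have e1 : min (i - N - a) k = 0 := by omega
        rw [e1, c0]
        have t1 : c (min (j - N - a) k) ≤ c (j - i) := cm _ _ (by omega)
        linarith [Nat.zero_le (c (min (j - i - N - a) k))]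
      · push_neg at h3
        have e1 : min (i - N - a) k = 0 := by omega
        rw [e1, c0]
        have hcj : c j = c N := cT j (by omega)
        have hcd : c (j - i) = c N := cT _ (by omega)
        have t1 := cw i (min (j - N - a) k)
        have t2 : c (min (j - N - a) k - i) ≤ c (min (j - i - N - a) k) :=
          cm _ _ (by omega)
        linarith

lemma arith2 (c : ℕ → ℕ) (N a : ℕ)
    (cw : ∀ i j : ℕ, c j ≤ c i + c (j - i))
    (cm : ∀ m n : ℕ, m ≤ n → c m ≤ c n)
    (c0 : c 0 = 0) (c1 : c 1 = 1)
    (cT : ∀ n, N ≤ n → c n = c N)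
    (hN : 1 ≤ N) (ha : N ≤ a) (i j : ℕ) (hij : i ≤ j)
    (hj : j ≤ N + a + N + a + 1) :
    c j + (c (j - N - a) + min (j - N - a - N - a) 1) ≤
      c i + (c (i - N - a) + min (i - N - a - N - a) 1) +
      (c (j - i) + (c (j - i - N - a) + min (j - i - N - a - N - a) 1)) := by
  have cle : ∀ n, c n ≤ c N := by
    intro n
    rcases le_total n N with h | h
    · exact cm _ _ h
    · exact (cT n h).le
  by_cases h1 : j ≤ N + a
  · have e1 : min (j - N - a - N - a) 1 = 0 := by omega
    have e2 : min (j - i - N - a - N - a) 1 = 0 := by omega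
    have e3 : j - N - a = 0 := by omega
    have e4 : j - i - N - a = 0 := by omega
    rw [e1, e2, e3, e4, c0]
    have t := cw i j
    linarith [Nat.zero_le (c (i - N - a) + min (i - N - a - N - a) 1)]
  · push_neg at h1
    by_cases h2 : N + a ≤ i
    · have hci : c i = c N := cT i (by omega)
      have hcj : c j = c N := cT j (by omega)
      by_cases h3 : j ≤ N + a + N + a
      · have e1 : min (j - N - a - N - a) 1 = 0 := by omega
        have e2 : min (i - N - a - N - a) 1 = 0 := by omega
        have t1 := cw (i - N - a) (j - N - a)
        have e3 : j - N - a - (i - N - a) = j - i := by omega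
        rw [e3] at t1
        rw [e1, e2]
        linarith [Nat.zero_le (c (j - i - N - a) + min (j - i - N - a - N - a) 1)]
      · push_neg at h3
        have e1 : min (j - N - a - N - a) 1 = 1 := by omega
        have hcj2 : c (j - N - a) = c N := cT _ (by omega)
        by_cases h4 : i ≤ N + a + N + a
        · have e2 : min (i - N - a - N - a) 1 = 0 := by omega
          by_cases h5 : i = N + a
          · have e4 : i - N - a = 0 := by omega
            have e5 : j - i - N - a = 1 := by omega
            have hcd : c (j - i) = c N := cT _ (by omega)
            have e6 : min (j - i - N - a - N - a) 1 = 0 := by omega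
            rw [e1, e2, e6, e4, e5, c0, c1, hcd, hcj2, hci, hcj]
            linarith
          · by_cases h6 : N ≤ j - i
            · have hcd : c (j - i) = c N := cT _ h6
              have t1 : 1 ≤ c (i - N - a) := by
                have := cm 1 (i - N - a) (by omega)
                rw [c1] at this
                exact this
              rw [e1, e2]
              linarith [Nat.zero_le (c (j - i - N - a) + min (j - i - N - a - N - a) 1)]
            · push_neg at h6
              have hci' : c (i - N - a) = c N := cT _ (by omega)
              have t1 : 1 ≤ c (j - i) := by
                have := cm 1 (j - i) (by omega)
                rw [c1] at this
                exact this
              rw [e1, e2]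
              linarith [Nat.zero_le (c (j - i - N - a) + min (j - i - N - a - N - a) 1)]
        · push_neg at h4
          have e : i = j := by omega
          subst e
          exact Nat.le_add_right _ _
    · push_neg at h2
      have e2a : i - N - a = 0 := by omega
      have e2b : min (i - N - a - N - a) 1 = 0 := by omega
      rw [e2b, e2a, c0]
      have hcj : c j = c N := cT j (by omega)
      by_cases h3 : N ≤ i
      · have hci : c i = c N := cT i h3
        by_cases h4 : j ≤ N + a + N + a
        · have e1 : min (j - N - a - N - a) 1 = 0 := by omega
          have t1 : c (j - N - a) ≤ c (j - i) := cm _ _ (by omega)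
          rw [e1]
          linarith [Nat.zero_le (c (j - i - N - a) + min (j - i - N - a - N - a) 1)]
        · push_neg at h4
          have e1 : min (j - N - a - N - a) 1 = 1 := by omega
          have hcj2 : c (j - N - a) = c N := cT _ (by omega)
          have hcd : c (j - i) = c N := cT _ (by omega)
          have t1 : 1 ≤ c (j - i - N - a) := by
            have := cm 1 _ (by omega : 1 ≤ j - i - N - a)
            rw [c1] at this
            exact this
          rw [e1]
          linarith [Nat.zero_le (min (j - i - N - a - N - a) 1)]
      · push_neg at h3
        have hcd : c (j - i) = c N := cT _ (by omega)
        by_cases h4 : j ≤ N + a + N + a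
        · have e1 : min (j - N - a - N - a) 1 = 0 := by omega
          have t1 := cw i (j - N - a)
          have t2 : c (j - N - a - i) ≤ c (j - i - N - a) := cm _ _ (by omega)
          rw [e1]
          linarith [Nat.zero_le (min (j - i - N - a - N - a) 1)]
        · push_neg at h4
          have e1 : min (j - N - a - N - a) 1 = 1 := by omega
          have hcj2 : c (j - N - a) = c N := cT _ (by omega)
          by_cases h5 : i = 0
          · subst h5
            have e3 : j - 0 = j := Nat.sub_zero j
            rw [e3, e1, c0]
            linarith
          · have t1 : 1 ≤ c i := by
              have := cm 1 i (by omega)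
              rw [c1] at this
              exact this
            have t2 : c (j - i - N - a) = c N := cT _ (by omega)
            have e4 : min (j - i - N - a - N - a) 1 = 0 := by omega
            rw [e1, e4]
            linarith

lemma P1 (x : List Bool) (hx : IsPrefixNormal1 x) (a k : ℕ) (ha : x.length ≤ a)
    (hk : k ≤ x.length) :
    IsPrefixNormal1 (x ++ (List.replicate a false ++ x.take k)) := by
  apply pn_of
  intro i j hij hj
  simp only [C_append, C_replicate, C_take, List.length_replicate, zero_add, add_zero]
  exact arith1 (C x) x.length a k (window x hx) (fun m n h => C_mono x h) (C_zero x)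
    (fun n hn => by rw [C_of_le x hn, C_of_le x le_rfl]) ha hk i j hij

lemma P2 (x : List Bool) (hx : IsPrefixNormal1 x) (h1 : x.head? = some true) (a : ℕ)
    (ha : x.length ≤ a) :
    IsPrefixNormal1
      (x ++ (List.replicate a false ++ (x ++ (List.replicate a false ++ [true])))) := by
  have hN : 1 ≤ x.length := by cases x <;> simp_all
  have hc1 : C x 1 = 1 := by
    cases x with
    | nil => simp at h1
    | cons b t =>
      simp only [List.head?_cons, Option.some.injEq] at h1
      subst h1
      rfl
  apply pn_of
  intro i j hij hj
  have hj' : j ≤ x.length + a + x.length + a + 1 := by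
    simp only [List.length_append, List.length_replicate, List.length_cons,
      List.length_nil] at hj
    omega
  simp only [C_append, C_replicate, C_singleton, List.length_append,
    List.length_replicate, List.length_cons, List.length_nil, zero_add, add_zero]
  exact arith2 (C x) x.length a (window x hx) (fun m n h => C_mono x h) (C_zero x) hc1
    (fun n hn => by rw [C_of_le x hn, C_of_le x le_rfl]) hN ha i j hij hj'

lemma sep (x y : List Bool) (hx : IsPrefixNormal1 x) (k : ℕ) (hk : k ≤ x.length)
    (hlt : C y k < C x k) :
    ∃ u, IsPrefixNormal1 (x ++ u) ∧ ¬ IsPrefixNormal1 (y ++ u) := by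
  refine ⟨List.replicate (max x.length y.length) false ++ x.take k,
    P1 x hx _ k (le_max_left _ _) hk, fun h => ?_⟩
  have hinf : x.take k <:+:
      y ++ (List.replicate (max x.length y.length) false ++ x.take k) :=
    ⟨y ++ List.replicate (max x.length y.length) false, [], by simp⟩
  have hc := h _ hinf
  have hlen : (x.take k).length = k := by
    rw [List.length_take]
    omega
  rw [hlen] at hc
  have h2 : C (y ++ (List.replicate (max x.length y.length) false ++ x.take k)) k
      = C y k := by
    simp only [C_append, C_replicate, C_take, List.length_replicate, zero_add, add_zero]
    have e : min (k - y.length - max x.length y.length) k = 0 := by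
      have := le_max_left x.length y.length
      omega
    rw [e, C_zero, add_zero]
  have hc2 : C x k ≤ C y k := by
    rw [← h2]
    exact hc
  exact absurd hlt (Nat.not_lt.mpr hc2)

lemma sepC (x : List Bool) (hx : IsPrefixNormal1 x) (h1 : x.head? = some true)
    (j : ℕ) (hj : 1 ≤ j) :
    ∃ u, IsPrefixNormal1 (x ++ u) ∧
      ¬ IsPrefixNormal1 ((x ++ List.replicate j false) ++ u) := by
  refine ⟨List.replicate x.length false ++ (x ++ (List.replicate x.length false ++ [true])),
    P2 x hx h1 x.length le_rfl, fun h => ?_⟩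
  have hinf : (x ++ (List.replicate x.length false ++ [true])) <:+:
      ((x ++ List.replicate j false) ++
        (List.replicate x.length false ++ (x ++ (List.replicate x.length false ++ [true])))) :=
    ⟨x ++ List.replicate j false ++ List.replicate x.length false, [],
      by simp only [List.append_nil, List.append_assoc]⟩
  have hc := h _ hinf
  have hlen : (x ++ (List.replicate x.length false ++ [true])).length
      = x.length + x.length + 1 := by
    simp only [List.length_append, List.length_replicate, List.length_cons,
      List.length_nil]
    omega
  have hcnt : (x ++ (List.replicate x.length false ++ [true])).count true
      = x.count true + 1 := by
    simp [List.count_append, List.count_replicate]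
  have hC : (List.take (x.length + x.length + 1) ((x ++ List.replicate j false) ++
      (List.replicate x.length false ++ (x ++ (List.replicate x.length false ++ [true]))))).count true
      = x.count true := by
    show C ((x ++ List.replicate j false) ++
      (List.replicate x.length false ++ (x ++ (List.replicate x.length false ++ [true]))))
      (x.length + x.length + 1) = x.count true
    simp only [C_append, C_replicate, C_singleton, List.length_append,
      List.length_replicate, List.length_cons, List.length_nil, zero_add, add_zero]
    have e1 : x.length + x.length + 1 - (x.length + j) - x.length = 0 := by omega
    have e2 : min (x.length + x.length + 1 - (x.length + j) - x.length - x.length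
        - x.length) 1 = 0 := by omega
    rw [e2, e1, C_zero, add_zero, add_zero, C_of_le x (by omega)]
  rw [hlen, hcnt, hC] at hc
  exact Nat.not_succ_le_self _ hc

lemma eq_of_C : ∀ x y : List Bool, x.length = y.length → (∀ n, C x n = C y n) → x = y := by
  intro x
  induction x with
  | nil =>
    intro y hl _
    exact (List.length_eq_zero_iff.mp hl.symm).symm
  | cons b t ih =>
    intro y hl hCeq
    cases y with
    | nil => simp at hl
    | cons b' t' =>
      have h1 := hCeq 1
      have hb : b = b' := by
        cases b <;> cases b' <;> first | rfl | (exfalso; simp [C] at h1)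
      subst hb
      have ht : t = t' := by
        apply ih
        · simpa using hl
        · intro n
          have h2 := hCeq (n + 1)
          simp only [C, List.take_succ_cons, List.count_cons] at h2
          exact Nat.add_right_cancel h2
      rw [ht]

end PN19

theorem stmt_19 (v w : List Bool) (hv : IsPrefixNormal1 v) (hw : IsPrefixNormal1 w)
    (hv1 : v.head? = some true) (hw1 : w.head? = some true) (hne : v ≠ w) :
    ∃ u : List Bool, Xor' (IsPrefixNormal1 (v ++ u)) (IsPrefixNormal1 (w ++ u)) := by
  classical
  by_cases hC : ∀ n, PN19.C v n = PN19.C w n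
  · rcases Nat.lt_trichotomy v.length w.length with hl | hl | hl
    · -- v is a proper prefix of w, remainder all zeros
      have hv' : v = w.take v.length := by
        apply PN19.eq_of_C
        · rw [List.length_take]
          omega
        · intro n
          rw [PN19.C_take, ← hC (min n v.length)]
          exact (PN19.C_min v n).symm
      have hcnt : w.count true = v.count true := by
        have h0 := hC w.length
        rw [PN19.C_of_le w le_rfl, PN19.C_of_le v (by omega)] at h0
        exact h0.symm
      have hsplit : w = v ++ w.drop v.length := by
        conv_lhs => rw [← List.take_append_drop v.length w]
        rw [← hv']
      have hrcount : (w.drop v.length).count true = 0 := by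
        have h3 := congrArg (List.count true) hsplit
        rw [List.count_append] at h3
        omega
      have hall : ∀ b ∈ w.drop v.length, b = false := by
        intro b hb
        cases b
        · rfl
        · exact absurd hb (List.count_eq_zero.mp hrcount)
      have hw2 : w = v ++ List.replicate (w.length - v.length) false := by
        have hlen2 : (w.drop v.length).length = w.length - v.length := List.length_drop
        rw [← hlen2]
        conv_lhs => rw [hsplit]
        congr 1
        exact List.eq_replicate_of_mem hall
      obtain ⟨u, h1, h2⟩ := PN19.sepC v hv hv1 (w.length - v.length) (by omega)
      rw [← hw2] at h2
      exact ⟨u, Or.inl ⟨h1, h2⟩⟩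
    · exact absurd (PN19.eq_of_C v w hl hC) hne
    · -- w is a proper prefix of v
      have hC' : ∀ n, PN19.C w n = PN19.C v n := fun n => (hC n).symm
      have hw' : w = v.take w.length := by
        apply PN19.eq_of_C
        · rw [List.length_take]
          omega
        · intro n
          rw [PN19.C_take, ← hC' (min n w.length)]
          exact (PN19.C_min w n).symm
      have hcnt : v.count true = w.count true := by
        have h0 := hC' v.length
        rw [PN19.C_of_le v le_rfl, PN19.C_of_le w (by omega)] at h0
        exact h0.symm
      have hsplit : v = w ++ v.drop w.length := by
        conv_lhs => rw [← List.take_append_drop w.length v]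
        rw [← hw']
      have hrcount : (v.drop w.length).count true = 0 := by
        have h3 := congrArg (List.count true) hsplit
        rw [List.count_append] at h3
        omega
      have hall : ∀ b ∈ v.drop w.length, b = false := by
        intro b hb
        cases b
        · rfl
        · exact absurd hb (List.count_eq_zero.mp hrcount)
      have hv2 : v = w ++ List.replicate (v.length - w.length) false := by
        have hlen2 : (v.drop w.length).length = v.length - w.length := List.length_drop
        rw [← hlen2]
        conv_lhs => rw [hsplit]
        congr 1
        exact List.eq_replicate_of_mem hall
      obtain ⟨u, h1, h2⟩ := PN19.sepC w hw hw1 (v.length - w.length) (by omega)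
      rw [← hv2] at h2
      exact ⟨u, Or.inr ⟨h1, h2⟩⟩
  · push_neg at hC
    obtain ⟨n, hn⟩ := hC
    rcases Nat.lt_or_ge (PN19.C v n) (PN19.C w n) with hlt | hge
    · -- w is denser: w ++ u prefix normal, v ++ u not
      have hkey : ∃ k, k ≤ w.length ∧ PN19.C v k < PN19.C w k := by
        by_cases hn2 : n ≤ w.length
        · exact ⟨n, hn2, hlt⟩
        · refine ⟨w.length, le_rfl, ?_⟩
          have e1 : PN19.C w n = PN19.C w w.length := by
            rw [PN19.C_of_le w (by omega), PN19.C_of_le w le_rfl]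
          have e2 : PN19.C v w.length ≤ PN19.C v n := PN19.C_mono v (by omega)
          rw [← e1]
          exact lt_of_le_of_lt e2 hlt
      obtain ⟨k, hk, hklt⟩ := hkey
      obtain ⟨u, h1, h2⟩ := PN19.sep w v hw k hk hklt
      exact ⟨u, Or.inr ⟨h1, h2⟩⟩
    · have hlt : PN19.C w n < PN19.C v n := lt_of_le_of_ne hge (fun e => hn e.symm)
      have hkey : ∃ k, k ≤ v.length ∧ PN19.C w k < PN19.C v k := by
        by_cases hn2 : n ≤ v.length
        · exact ⟨n, hn2, hlt⟩
        · refine ⟨v.length, le_rfl, ?_⟩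
          have e1 : PN19.C v n = PN19.C v v.length := by
            rw [PN19.C_of_le v (by omega), PN19.C_of_le v le_rfl]
          have e2 : PN19.C w v.length ≤ PN19.C w n := PN19.C_mono w (by omega)
          rw [← e1]
          exact lt_of_le_of_lt e2 hlt
      obtain ⟨k, hk, hklt⟩ := hkey
      obtain ⟨u, h1, h2⟩ := PN19.sep v w hv k hk hklt
      exact ⟨u, Or.inl ⟨h1, h2⟩⟩
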